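/- Let σ² > 0 satisfy e·σ² < 1 and let ρ, σ_F ≥ 0. Then Σ_{i=2}^∞ (1/i!)·ρ·σ_F·√(σ^{2i}·(2i)!/(2^i i!)) ≤ ρ·σ_F·π^{−1/2}·2^{−1/2}·(e σ²)/(1 − √(e σ²)). -/
import Mathlib


open Real

lemma fac2 (i : ℕ) : Nat.factorial (2*i) ≤ 4^i * (Nat.factorial i)^2 := by
  induction i with
  | zero => simp
  | succ i ih =>
    have h : 2*(i+1) = (2*i+1)+1 := by ring
    rw [h, Nat.factorial_succ, Nat.factorial_succ, Nat.factorial_succ]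
    calc (2*i+1+1) * ((2*i+1) * Nat.factorial (2*i))
        ≤ (2*i+2) * ((2*i+2) * (4^i * (Nat.factorial i)^2)) := by
          apply Nat.mul_le_mul (by omega)
          exact Nat.mul_le_mul (by omega) ih
      _ = 4^(i+1) * ((i+1) * Nat.factorial i)^2 := by ring

lemma exp_cube : (19:ℝ) ≤ (Real.exp 1)^3 := by
  have h1 : (2.7:ℝ) ≤ Real.exp 1 := by linarith [Real.exp_one_gt_d9]
  have h2 : (7.29:ℝ) ≤ (Real.exp 1)^2 := by nlinarith
  nlinarith

lemma key2 (i : ℕ) (hi : 3 ≤ i) : 2*π*2^i ≤ (Nat.factorial i : ℝ) * (Real.exp 1)^i := by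
  obtain ⟨k, rfl⟩ := Nat.exists_eq_add_of_le hi
  have h2k : (2:ℝ)^k ≤ (Real.exp 1)^k := by
    apply pow_le_pow_left₀ (by norm_num)
    nlinarith [Real.exp_one_gt_d9]
  have hfac : (6:ℝ) ≤ Nat.factorial (3+k) := by
    have := Nat.factorial_le (show 3 ≤ 3 + k by omega)
    exact_mod_cast Nat.le_trans (by norm_num [Nat.factorial]) this
  have hek : (0:ℝ) ≤ (Real.exp 1)^k := by positivity
  have h2kp : (0:ℝ) < 2^k := by positivity
  rw [pow_add, pow_add]
  nlinarith [Real.pi_le_four, Real.pi_pos,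
    mul_le_mul hfac exp_cube (by norm_num) (by linarith)]

lemma key (i : ℕ) (hi : 2 ≤ i) :
    2*π*(Nat.factorial (2*i) : ℝ) ≤ (Nat.factorial i : ℝ)^3 * (Real.exp 1)^i * 2^i := by
  rcases eq_or_lt_of_le hi with h | h
  · subst h
    have h1 : (2.7:ℝ) ≤ Real.exp 1 := by linarith [Real.exp_one_gt_d9]
    have h2 : (7.29:ℝ) ≤ (Real.exp 1)^2 := by nlinarith
    have h3 : (7.29:ℝ) ≤ Real.exp 2 :=
      calc (7.29:ℝ) ≤ (Real.exp 1)^2 := h2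
        _ = Real.exp 2 := by rw [← Real.exp_nat_mul]; norm_num
    norm_num [Nat.factorial]
    nlinarith [Real.pi_le_four]
  · have h3 : 3 ≤ i := h
    have hf : (Nat.factorial (2*i) : ℝ) ≤ 4^i * (Nat.factorial i : ℝ)^2 := by
      exact_mod_cast fac2 i
    have hk := key2 i h3
    have hfp : (0:ℝ) < Nat.factorial i := by exact_mod_cast Nat.factorial_pos i
    have h4 : (4:ℝ)^i = 2^i * 2^i := by rw [← mul_pow]; norm_num
    have h2p : (0:ℝ) < 2^i := by positivity
    calc 2*π*(Nat.factorial (2*i) : ℝ) ≤ 2*π*(4^i * (Nat.factorial i : ℝ)^2) := by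
          apply mul_le_mul_of_nonneg_left hf; positivity
      _ = (2*π*2^i) * ((Nat.factorial i : ℝ)^2 * 2^i) := by rw [h4]; ring
      _ ≤ ((Nat.factorial i : ℝ) * (Real.exp 1)^i) * ((Nat.factorial i : ℝ)^2 * 2^i) := by
          apply mul_le_mul_of_nonneg_right hk; positivity
      _ = (Nat.factorial i : ℝ)^3 * (Real.exp 1)^i * 2^i := by ring

lemma term_le (s : ℝ) (hs : 0 < s) (i : ℕ) (hi : 2 ≤ i) :
    (1 / (Nat.factorial i : ℝ)) *
      Real.sqrt (s ^ i * (Nat.factorial (2*i)) / (2 ^ i * Nat.factorial i))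
    ≤ (Real.sqrt (2*π))⁻¹ * (Real.sqrt (Real.exp 1 * s)) ^ i := by
  set x := Real.sqrt (Real.exp 1 * s) with hxdef
  have hes : (0:ℝ) ≤ Real.exp 1 * s := by positivity
  have hx2 : x^2 = Real.exp 1 * s := Real.sq_sqrt hes
  have hx0 : 0 ≤ x := Real.sqrt_nonneg _
  have hfp : (0:ℝ) < Nat.factorial i := by exact_mod_cast Nat.factorial_pos i
  have h2π : (0:ℝ) < 2*π := by positivity
  have hsq : ((Nat.factorial i : ℝ) * x^i / Real.sqrt (2*π))^2
      = (Nat.factorial i : ℝ)^2 * (Real.exp 1 * s)^i / (2*π) := by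
    rw [div_pow, mul_pow, ← pow_mul, mul_comm i 2, pow_mul, hx2, Real.sq_sqrt h2π.le]
  have harg : s ^ i * (Nat.factorial (2*i)) / (2 ^ i * Nat.factorial i)
      ≤ ((Nat.factorial i : ℝ) * x^i / Real.sqrt (2*π))^2 := by
    rw [hsq, div_le_div_iff₀ (by positivity) h2π]
    have hk := mul_le_mul_of_nonneg_right (key i hi) (pow_nonneg hs.le i)
    calc s ^ i * (Nat.factorial (2*i) : ℝ) * (2*π)
        = 2*π*(Nat.factorial (2*i) : ℝ) * s^i := by ring
      _ ≤ (Nat.factorial i : ℝ)^3 * (Real.exp 1)^i * 2^i * s^i := hk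
      _ = (Nat.factorial i : ℝ)^2 * (Real.exp 1 * s)^i * (2^i * Nat.factorial i) := by
          rw [mul_pow]; ring
  have hsqrt := Real.sqrt_le_sqrt harg
  rw [Real.sqrt_sq (by positivity)] at hsqrt
  calc (1 / (Nat.factorial i : ℝ)) *
      Real.sqrt (s ^ i * (Nat.factorial (2*i)) / (2 ^ i * Nat.factorial i))
      ≤ (1 / (Nat.factorial i : ℝ)) * ((Nat.factorial i : ℝ) * x^i / Real.sqrt (2*π)) := by
        apply mul_le_mul_of_nonneg_left hsqrt; positivity
    _ = (Real.sqrt (2*π))⁻¹ * x ^ i := by field_simp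

/-- If `e σ² < 1` (with `σ² > 0`, `ρ, σ_F ≥ 0`), then
`Σ_{i=2}^∞ (1/i!) ρ σ_F √(σ^{2i} (2i)!/(2^i i!))
  ≤ ρ σ_F π^{-1/2} 2^{-1/2} (e σ²)/(1 − √(e σ²))`.
Here `s = σ²` and the series is indexed by `i = j + 2`, `j ≥ 0`. -/
theorem covariance_tail_bound (s ρ σF : ℝ) (hs : 0 < s)
    (hes : Real.exp 1 * s < 1) (hρ : 0 ≤ ρ) (hσF : 0 ≤ σF) :
    ∑' j : ℕ,
        (1 / (Nat.factorial (j + 2) : ℝ)) * (ρ * σF *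
          Real.sqrt (s ^ (j + 2) * (Nat.factorial (2 * (j + 2))) /
            (2 ^ (j + 2) * Nat.factorial (j + 2))))
      ≤ ρ * σF * (Real.sqrt Real.pi)⁻¹ * (Real.sqrt 2)⁻¹ *
          (Real.exp 1 * s) / (1 - Real.sqrt (Real.exp 1 * s)) := by
  set x := Real.sqrt (Real.exp 1 * s) with hxdef
  have hes0 : (0:ℝ) ≤ Real.exp 1 * s := by positivity
  have hx0 : 0 ≤ x := Real.sqrt_nonneg _
  have hx1 : x < 1 := by
    have := Real.sqrt_lt_sqrt hes0 hes
    simpa using this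
  have hx2 : x^2 = Real.exp 1 * s := Real.sq_sqrt hes0
  set c : ℝ := ρ * σF * (Real.sqrt (2*π))⁻¹ with hcdef
  have hc0 : 0 ≤ c := by positivity
  have hterm : ∀ j : ℕ,
      (1 / (Nat.factorial (j + 2) : ℝ)) * (ρ * σF *
          Real.sqrt (s ^ (j + 2) * (Nat.factorial (2 * (j + 2))) /
            (2 ^ (j + 2) * Nat.factorial (j + 2))))
      ≤ c * x ^ (j + 2) := by
    intro j
    have h := term_le s hs (j+2) (by omega)
    calc (1 / (Nat.factorial (j + 2) : ℝ)) * (ρ * σF *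
          Real.sqrt (s ^ (j + 2) * (Nat.factorial (2 * (j + 2))) /
            (2 ^ (j + 2) * Nat.factorial (j + 2))))
        = (ρ * σF) * ((1 / (Nat.factorial (j + 2) : ℝ)) *
          Real.sqrt (s ^ (j + 2) * (Nat.factorial (2 * (j + 2))) /
            (2 ^ (j + 2) * Nat.factorial (j + 2)))) := by ring
      _ ≤ (ρ * σF) * ((Real.sqrt (2*π))⁻¹ * x ^ (j+2)) := by
          apply mul_le_mul_of_nonneg_left h; positivity
      _ = c * x ^ (j + 2) := by rw [hcdef]; ring
  have hgsum : Summable (fun j : ℕ => c * x ^ (j + 2)) := by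
    have : Summable (fun j : ℕ => x ^ j) := summable_geometric_of_lt_one hx0 hx1
    have := (this.mul_left (c * x ^ 2))
    apply this.congr
    intro j
    rw [pow_add]; ring
  have hfnn : ∀ j : ℕ, 0 ≤ (1 / (Nat.factorial (j + 2) : ℝ)) * (ρ * σF *
          Real.sqrt (s ^ (j + 2) * (Nat.factorial (2 * (j + 2))) /
            (2 ^ (j + 2) * Nat.factorial (j + 2)))) := by
    intro j; positivity
  have hfs : Summable (fun j : ℕ =>
      (1 / (Nat.factorial (j + 2) : ℝ)) * (ρ * σF *
          Real.sqrt (s ^ (j + 2) * (Nat.factorial (2 * (j + 2))) /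
            (2 ^ (j + 2) * Nat.factorial (j + 2))))) :=
    Summable.of_nonneg_of_le hfnn hterm hgsum
  have hle := Summable.tsum_le_tsum hterm hfs hgsum
  refine hle.trans ?_
  have hgeo : ∑' j : ℕ, c * x ^ (j + 2) = c * x^2 * (1 - x)⁻¹ := by
    have h1 : ∑' j : ℕ, x ^ j = (1 - x)⁻¹ := tsum_geometric_of_lt_one hx0 hx1
    calc ∑' j : ℕ, c * x ^ (j + 2) = ∑' j : ℕ, (c * x^2) * x ^ j := by
          congr 1; funext j; rw [pow_add]; ring
      _ = (c * x^2) * ∑' j : ℕ, x ^ j := tsum_mul_left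
      _ = c * x^2 * (1 - x)⁻¹ := by rw [h1]
  rw [hgeo, hcdef, hx2]
  have hsplit : Real.sqrt (2*π) = Real.sqrt 2 * Real.sqrt π :=
    Real.sqrt_mul (by norm_num) π
  rw [hsplit, mul_inv, div_eq_mul_inv]
  ring_nf
  exact le_rfl
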